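/- Convergence of FedProx in the convex case with exact local solves. Assume each F k is convex and differentiable with L-Lipschitz gradient, L > 0. Let wᵗ ∈ E, let the local functions be B-dissimilar at wᵗ with 1 ≤ B, let K be a natural number with 16·B² ≤ K, set μ := 6·L·B², and for each device k let w k⁺ solve the proximal subproblem exactly, i.e. ∇F k (w k⁺) + μ·(w k⁺ − wᵗ) = 0. Then the expected objective after one FedProx round satisfies ∑_{s : Fin K → Fin N} (∏ j, p (s j)) · f((1/K)·∑ j, w (s j)⁺) ≤ f(wᵗ) − (1/(24·L·B²))·‖∇f(wᵗ)‖². -/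

import Mathlib

open scoped BigOperators RealInnerProductSpace
open InnerProductSpace

section Helpers

variable {E : Type*} [NormedAddCommGroup E] [InnerProductSpace ℝ E] [CompleteSpace E]

lemma fedprox_aux_hasGradientAt_sum {N : ℕ} (p : Fin N → ℝ) (F : Fin N → E → ℝ)
    (hFdiff : ∀ k, Differentiable ℝ (F k)) (x : E) :
    HasGradientAt (fun w => ∑ k, p k * F k w) (∑ k, p k • gradient (F k) x) x := by
  have h2 : HasFDerivAt (fun w => ∑ k, p k * F k w)
      (∑ k, p k • (toDual ℝ E (gradient (F k) x))) x :=
    HasFDerivAt.fun_sum (fun k _ =>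
      (((hFdiff k) x).hasGradientAt.hasFDerivAt).const_mul (p k))
  rw [hasGradientAt_iff_hasFDerivAt, map_sum]
  simpa [map_smul] using h2

lemma fedprox_aux_descent {f : E → ℝ} {g : E → E}
    (hg : ∀ x, HasGradientAt f (g x) x)
    {L : ℝ} (hL : 0 ≤ L) (hlip : ∀ a b, ‖g a - g b‖ ≤ L * ‖a - b‖) (x y : E) :
    f y ≤ f x + ⟪g x, y - x⟫_ℝ + L / 2 * ‖y - x‖ ^ 2 := by
  set v : E := y - x with hv
  set φ : ℝ → ℝ := fun t => f (x + t • v) - t * ⟪g x, v⟫_ℝ - L / 2 * t ^ 2 * ‖v‖ ^ 2 with hφ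
  have hcurve : ∀ t : ℝ, HasDerivAt (fun t : ℝ => x + t • v) v t := by
    intro t
    simpa using ((hasDerivAt_id t).smul_const v).const_add x
  have hφ' : ∀ t : ℝ, HasDerivAt φ
      (⟪g (x + t • v), v⟫_ℝ - ⟪g x, v⟫_ℝ - L * t * ‖v‖ ^ 2) t := by
    intro t
    have h1 : HasDerivAt (fun t : ℝ => f (x + t • v)) (⟪g (x + t • v), v⟫_ℝ) t := by
      have := ((hg (x + t • v)).hasFDerivAt).comp_hasDerivAt t (hcurve t)
      simpa [toDual_apply_apply, Function.comp_def] using this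
    have h2 : HasDerivAt (fun t : ℝ => t * ⟪g x, v⟫_ℝ) (⟪g x, v⟫_ℝ) t := by
      simpa using (hasDerivAt_id t).mul_const (⟪g x, v⟫_ℝ)
    have h3 : HasDerivAt (fun t : ℝ => L / 2 * t ^ 2 * ‖v‖ ^ 2) (L * t * ‖v‖ ^ 2) t := by
      have := (hasDerivAt_pow 2 t).const_mul (L / 2)
      have := this.mul_const (‖v‖ ^ 2)
      exact this.congr_deriv (by rw [show (2:ℕ) - 1 = 1 from rfl, pow_one, Nat.cast_ofNat]; ring)
    exact (h1.sub h2).sub h3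
  have hanti : AntitoneOn φ (Set.Icc (0:ℝ) 1) := by
    apply antitoneOn_of_deriv_nonpos (convex_Icc 0 1)
    · exact fun t _ => ((hφ' t).continuousAt).continuousWithinAt
    · exact fun t _ => ((hφ' t).differentiableAt).differentiableWithinAt
    · intro t ht
      rw [interior_Icc] at ht
      rw [(hφ' t).deriv]
      have hip : ⟪g (x + t • v) - g x, v⟫_ℝ ≤ ‖g (x + t • v) - g x‖ * ‖v‖ :=
        real_inner_le_norm _ _
      have hlb : ‖g (x + t • v) - g x‖ ≤ L * (t * ‖v‖) := by
        have := hlip (x + t • v) x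
        simpa [norm_smul, abs_of_pos ht.1, mul_assoc] using this
      have hv0 : (0:ℝ) ≤ ‖v‖ := norm_nonneg _
      have : ⟪g (x + t • v), v⟫_ℝ - ⟪g x, v⟫_ℝ ≤ L * t * ‖v‖ ^ 2 := by
        have h := hip.trans (mul_le_mul_of_nonneg_right hlb hv0)
        calc ⟪g (x + t • v), v⟫_ℝ - ⟪g x, v⟫_ℝ = ⟪g (x + t • v) - g x, v⟫_ℝ := by
              rw [inner_sub_left]
          _ ≤ L * (t * ‖v‖) * ‖v‖ := h
          _ = L * t * ‖v‖ ^ 2 := by ring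
      linarith
  have h01 : φ 1 ≤ φ 0 :=
    hanti (Set.left_mem_Icc.2 zero_le_one) (Set.right_mem_Icc.2 zero_le_one) zero_le_one
  have e0 : φ 0 = f x := by simp [hφ]
  have e1 : φ 1 = f y - ⟪g x, v⟫_ℝ - L / 2 * ‖v‖ ^ 2 := by
    simp [hφ, hv]
  rw [e0, e1] at h01
  linarith

end Helpers

lemma fedprox_aux_marg {N K : ℕ} (p : Fin N → ℝ) (hp1 : ∑ k, p k = 1)
    (q : Fin N → ℝ) (j₀ : Fin K) :
    ∑ s : Fin K → Fin N, (∏ j, p (s j)) * q (s j₀) = ∑ k, p k * q k := by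
  classical
  have key : ∀ s : Fin K → Fin N, (∏ j, p (s j)) * q (s j₀)
      = ∏ j, (fun j k => if j = j₀ then p k * q k else p k) j (s j) := by
    intro s
    have h1 : ∏ j, (fun j k => if j = j₀ then p k * q k else p k) j (s j)
        = (p (s j₀) * q (s j₀)) * ∏ j ∈ Finset.univ \ {j₀}, p (s j) := by
      rw [Finset.prod_eq_mul_prod_sdiff_singleton_of_mem (Finset.mem_univ j₀)]
      congr 1
      · simp
      · exact Finset.prod_congr rfl fun j hj => by
          simp only [Finset.mem_sdiff, Finset.mem_singleton] at hj
          simp [hj.2]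
    have h2 : ∏ j, p (s j) = p (s j₀) * ∏ j ∈ Finset.univ \ {j₀}, p (s j) :=
      Finset.prod_eq_mul_prod_sdiff_singleton_of_mem (Finset.mem_univ j₀) _
    rw [h1, h2]; ring
  have h3 := Finset.sum_prod_piFinset (ι := Fin K) (Finset.univ : Finset (Fin N))
    (fun j k => if j = j₀ then p k * q k else p k)
  rw [Fintype.piFinset_univ] at h3
  rw [Finset.sum_congr rfl (fun s _ => key s), h3]
  rw [Finset.prod_eq_single j₀ (fun j _ hj => by simp [hj, hp1]) (by simp)]
  simp

lemma fedprox_aux_total {N K : ℕ} (p : Fin N → ℝ) (hp1 : ∑ k, p k = 1) :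
    ∑ s : Fin K → Fin N, (∏ j, p (s j)) = 1 := by
  classical
  rw [← Fintype.piFinset_univ, ← Finset.prod_univ_sum (fun _ : Fin K => Finset.univ)
    (fun _ k => p k)]
  simp [hp1]

set_option maxHeartbeats 1000000 in
/-- Convergence of FedProx in the convex case with exact local solves. -/
theorem fedprox_convex_exact_descent
    {E : Type*} [NormedAddCommGroup E] [InnerProductSpace ℝ E] [CompleteSpace E]
    {N : ℕ} (hN : 1 ≤ N) (p : Fin N → ℝ)
    (hp : ∀ k, 0 ≤ p k) (hp1 : ∑ k, p k = 1)
    (F : Fin N → E → ℝ) (f : E → ℝ) (hf : ∀ w, f w = ∑ k, p k * F k w)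
    {L : ℝ} (hL : 0 < L)
    (hFconv : ∀ k, ConvexOn ℝ Set.univ (F k))
    (hFdiff : ∀ k, Differentiable ℝ (F k))
    (hFlip : ∀ k, LipschitzWith (Real.toNNReal L) (gradient (F k)))
    (wt : E) {B : ℝ} (hB : 1 ≤ B)
    (hdissim : ∑ k, p k * ‖gradient (F k) wt‖ ^ 2 ≤ B ^ 2 * ‖gradient f wt‖ ^ 2)
    {K : ℕ} (hK : 16 * B ^ 2 ≤ (K : ℝ))
    (wplus : Fin N → E)
    (hexact : ∀ k,
      gradient (F k) (wplus k) + (6 * L * B ^ 2) • (wplus k - wt) = 0) :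
    ∑ s : Fin K → Fin N, (∏ j, p (s j)) * f ((1 / (K : ℝ)) • ∑ j, wplus (s j))
      ≤ f wt - (1 / (24 * L * B ^ 2)) * ‖gradient f wt‖ ^ 2 := by
  classical
  have hB0 : (0:ℝ) < B := lt_of_lt_of_le one_pos hB
  have hB2 : (1:ℝ) ≤ B ^ 2 := by nlinarith
  set μ : ℝ := 6 * L * B ^ 2 with hμdef
  have hμpos : (0:ℝ) < μ := by
    have := mul_pos (mul_pos (by norm_num : (0:ℝ) < 6) hL) (pow_pos hB0 2)
    simpa [hμdef, mul_assoc] using this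
  have hK1 : (1:ℝ) ≤ (K:ℝ) := by nlinarith
  have hKpos : (0:ℝ) < (K:ℝ) := lt_of_lt_of_le one_pos hK1
  have hKne : ((K:ℝ)) ≠ 0 := ne_of_gt hKpos
  -- gradient of f
  set g : E → E := fun x => ∑ k, p k • gradient (F k) x with hgdef
  have hfe : f = fun w => ∑ k, p k * F k w := funext hf
  have hgradf : ∀ x, HasGradientAt f (g x) x := by
    intro x
    rw [hfe]
    exact fedprox_aux_hasGradientAt_sum p F hFdiff x
  set gw : E := gradient f wt with hgw
  have hgwt : gw = ∑ k, p k • gradient (F k) wt := (hgradf wt).gradient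
  have hL' : ∀ k (a b : E), ‖gradient (F k) a - gradient (F k) b‖ ≤ L * ‖a - b‖ := by
    intro k a b
    have := (hFlip k).dist_le_mul a b
    rwa [dist_eq_norm, dist_eq_norm, Real.coe_toNNReal L hL.le] at this
  have hglip : ∀ a b, ‖g a - g b‖ ≤ L * ‖a - b‖ := by
    intro a b
    have h1 : g a - g b = ∑ k, p k • (gradient (F k) a - gradient (F k) b) := by
      simp [hgdef, Finset.sum_sub_distrib, smul_sub]
    rw [h1]
    calc ‖∑ k, p k • (gradient (F k) a - gradient (F k) b)‖
        ≤ ∑ k, ‖p k • (gradient (F k) a - gradient (F k) b)‖ := norm_sum_le _ _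
      _ = ∑ k, p k * ‖gradient (F k) a - gradient (F k) b‖ := by
          refine Finset.sum_congr rfl fun k _ => ?_
          rw [norm_smul, Real.norm_eq_abs, abs_of_nonneg (hp k)]
      _ ≤ ∑ k, p k * (L * ‖a - b‖) :=
          Finset.sum_le_sum fun k _ => mul_le_mul_of_nonneg_left (hL' k a b) (hp k)
      _ = L * ‖a - b‖ := by rw [← Finset.sum_mul, hp1, one_mul]
  -- exact solve consequences
  have hgradplus : ∀ k, gradient (F k) (wplus k) = -(μ • (wplus k - wt)) :=
    fun k => eq_neg_of_add_eq_zero_left (hexact k)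
  have h6L : 6 * L ≤ μ := by rw [hμdef]; nlinarith
  have hlipk : ∀ k, ‖gradient (F k) (wplus k) - gradient (F k) wt‖ ≤ L * ‖wplus k - wt‖ :=
    fun k => hL' k (wplus k) wt
  have hnv : ∀ k, ‖wplus k - wt‖ ≤ 6 / (5 * μ) * ‖gradient (F k) wt‖ := by
    intro k
    have h1 : ‖gradient (F k) (wplus k)‖ = μ * ‖wplus k - wt‖ := by
      rw [hgradplus k, norm_neg, norm_smul, Real.norm_eq_abs, abs_of_pos hμpos]
    have h3 : μ * ‖wplus k - wt‖ ≤ L * ‖wplus k - wt‖ + ‖gradient (F k) wt‖ := by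
      calc μ * ‖wplus k - wt‖ = ‖gradient (F k) (wplus k)‖ := h1.symm
        _ = ‖(gradient (F k) (wplus k) - gradient (F k) wt) + gradient (F k) wt‖ := by
            rw [sub_add_cancel]
        _ ≤ ‖gradient (F k) (wplus k) - gradient (F k) wt‖ + ‖gradient (F k) wt‖ :=
            norm_add_le _ _
        _ ≤ L * ‖wplus k - wt‖ + ‖gradient (F k) wt‖ := by
            have := hlipk k; linarith
    have h4 : 6 * L * ‖wplus k - wt‖ ≤ μ * ‖wplus k - wt‖ :=
      mul_le_mul_of_nonneg_right h6L (norm_nonneg _)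
    rw [div_mul_eq_mul_div, le_div_iff₀ (by positivity)]
    nlinarith [h3, h4]
  have hd : ∀ k, ‖gradient (F k) (wplus k) - gradient (F k) wt‖
      ≤ 6 * L / (5 * μ) * ‖gradient (F k) wt‖ := by
    intro k
    calc ‖gradient (F k) (wplus k) - gradient (F k) wt‖ ≤ L * ‖wplus k - wt‖ := hlipk k
      _ ≤ L * (6 / (5 * μ) * ‖gradient (F k) wt‖) :=
          mul_le_mul_of_nonneg_left (hnv k) hL.le
      _ = 6 * L / (5 * μ) * ‖gradient (F k) wt‖ := by ring
  -- Cauchy-Schwarz : ∑ p a ≤ B ‖gw‖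
  have hA : ∑ k, p k * ‖gradient (F k) wt‖ ≤ B * ‖gw‖ := by
    have hcs := Finset.sum_mul_sq_le_sq_mul_sq Finset.univ (fun k => Real.sqrt (p k))
      (fun k => Real.sqrt (p k) * ‖gradient (F k) wt‖)
    have e1 : ∀ k : Fin N, Real.sqrt (p k) * (Real.sqrt (p k) * ‖gradient (F k) wt‖)
        = p k * ‖gradient (F k) wt‖ := fun k => by
      rw [← mul_assoc, Real.mul_self_sqrt (hp k)]
    have e2 : ∀ k : Fin N, Real.sqrt (p k) ^ 2 = p k := fun k => Real.sq_sqrt (hp k)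
    have e3 : ∀ k : Fin N, (Real.sqrt (p k) * ‖gradient (F k) wt‖) ^ 2
        = p k * ‖gradient (F k) wt‖ ^ 2 := fun k => by
      rw [mul_pow, Real.sq_sqrt (hp k)]
    rw [Finset.sum_congr rfl (fun k _ => e1 k), Finset.sum_congr rfl (fun k _ => e2 k),
      Finset.sum_congr rfl (fun k _ => e3 k), hp1, one_mul] at hcs
    have h5 : (∑ k, p k * ‖gradient (F k) wt‖) ^ 2 ≤ (B * ‖gw‖) ^ 2 := by
      calc (∑ k, p k * ‖gradient (F k) wt‖) ^ 2 ≤ ∑ k, p k * ‖gradient (F k) wt‖ ^ 2 := hcs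
        _ ≤ B ^ 2 * ‖gw‖ ^ 2 := hdissim
        _ = (B * ‖gw‖) ^ 2 := by ring
    have h6 : (0:ℝ) ≤ ∑ k, p k * ‖gradient (F k) wt‖ :=
      Finset.sum_nonneg fun k _ => mul_nonneg (hp k) (norm_nonneg _)
    nlinarith [h5, h6, mul_nonneg hB0.le (norm_nonneg gw)]
  -- linear term bound
  have hsplit : ∀ k, wplus k - wt
      = (-(1/μ)) • (gradient (F k) wt + (gradient (F k) (wplus k) - gradient (F k) wt)) := by
    intro k
    rw [add_sub_cancel, hgradplus k, smul_neg, neg_smul, neg_neg, smul_smul, one_div,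
      inv_mul_cancel₀ (ne_of_gt hμpos), one_smul]
  have hsum1 : ∑ k, p k * ⟪gw, gradient (F k) wt⟫_ℝ = ‖gw‖ ^ 2 := by
    have h1 : ∑ k, p k * ⟪gw, gradient (F k) wt⟫_ℝ = ⟪gw, ∑ k, p k • gradient (F k) wt⟫_ℝ := by
      rw [inner_sum]
      exact Finset.sum_congr rfl fun k _ => (real_inner_smul_right _ _ _).symm
    rw [h1, ← hgwt, real_inner_self_eq_norm_sq]
  have hsum2 : -(1/(5*B)) * ‖gw‖ ^ 2
      ≤ ∑ k, p k * ⟪gw, gradient (F k) (wplus k) - gradient (F k) wt⟫_ℝ := by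
    have hterm : ∀ k : Fin N, -(p k * (‖gw‖ * (6 * L / (5 * μ) * ‖gradient (F k) wt‖)))
        ≤ p k * ⟪gw, gradient (F k) (wplus k) - gradient (F k) wt⟫_ℝ := by
      intro k
      have h1 : |⟪gw, gradient (F k) (wplus k) - gradient (F k) wt⟫_ℝ|
          ≤ ‖gw‖ * ‖gradient (F k) (wplus k) - gradient (F k) wt‖ := abs_real_inner_le_norm _ _
      have h2 : ‖gw‖ * ‖gradient (F k) (wplus k) - gradient (F k) wt‖
          ≤ ‖gw‖ * (6 * L / (5 * μ) * ‖gradient (F k) wt‖) :=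
        mul_le_mul_of_nonneg_left (hd k) (norm_nonneg _)
      have h3 : -(‖gw‖ * (6 * L / (5 * μ) * ‖gradient (F k) wt‖))
          ≤ ⟪gw, gradient (F k) (wplus k) - gradient (F k) wt⟫_ℝ := by
        have := neg_abs_le (⟪gw, gradient (F k) (wplus k) - gradient (F k) wt⟫_ℝ)
        linarith
      have := mul_le_mul_of_nonneg_left h3 (hp k)
      linarith [this]
    calc -(1/(5*B)) * ‖gw‖ ^ 2
        = -(‖gw‖ * (6 * L / (5 * μ) * (B * ‖gw‖))) := by
          rw [hμdef]; field_simp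
      _ ≤ -(‖gw‖ * (6 * L / (5 * μ) * (∑ k, p k * ‖gradient (F k) wt‖))) := by
          have h1 : ‖gw‖ * (6 * L / (5 * μ) * (∑ k, p k * ‖gradient (F k) wt‖))
              ≤ ‖gw‖ * (6 * L / (5 * μ) * (B * ‖gw‖)) := by
            refine mul_le_mul_of_nonneg_left (mul_le_mul_of_nonneg_left hA ?_) (norm_nonneg _)
            positivity
          linarith
      _ = ∑ k, -(p k * (‖gw‖ * (6 * L / (5 * μ) * ‖gradient (F k) wt‖))) := by
          have hX : ‖gw‖ * (6 * L / (5 * μ) * ∑ k, p k * ‖gradient (F k) wt‖)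
              = ∑ k, p k * (‖gw‖ * (6 * L / (5 * μ) * ‖gradient (F k) wt‖)) := by
            rw [Finset.mul_sum, Finset.mul_sum]
            exact Finset.sum_congr rfl fun k _ => by ring
          rw [hX, ← Finset.sum_neg_distrib]
      _ ≤ ∑ k, p k * ⟪gw, gradient (F k) (wplus k) - gradient (F k) wt⟫_ℝ :=
          Finset.sum_le_sum fun k _ => hterm k
  have hT : ∑ k, p k * ⟪gw, wplus k - wt⟫_ℝ ≤ -(4 / (5 * μ)) * ‖gw‖ ^ 2 := by
    have e : ∀ k : Fin N, ⟪gw, wplus k - wt⟫_ℝ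
        = -(1/μ) * (⟪gw, gradient (F k) wt⟫_ℝ
          + ⟪gw, gradient (F k) (wplus k) - gradient (F k) wt⟫_ℝ) := by
      intro k
      conv_lhs => rw [hsplit k]
      rw [real_inner_smul_right, inner_add_right]
    have hTeq : ∑ k, p k * ⟪gw, wplus k - wt⟫_ℝ
        = -(1/μ) * (‖gw‖ ^ 2
          + ∑ k, p k * ⟪gw, gradient (F k) (wplus k) - gradient (F k) wt⟫_ℝ) := by
      rw [Finset.sum_congr rfl (fun k _ => by rw [e k])]
      rw [← hsum1, ← Finset.sum_add_distrib, Finset.mul_sum]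
      exact Finset.sum_congr rfl fun k _ => by ring
    rw [hTeq]
    have hBB : 1/(5*B) ≤ 1/5 := by
      rw [div_le_div_iff₀ (by positivity) (by norm_num)]
      nlinarith
    have hkey : 4/5 * ‖gw‖ ^ 2 ≤ ‖gw‖ ^ 2
        + ∑ k, p k * ⟪gw, gradient (F k) (wplus k) - gradient (F k) wt⟫_ℝ := by
      have h1 : -(1/(5*B)) * ‖gw‖ ^ 2 ≥ -(1/5) * ‖gw‖ ^ 2 := by
        have := mul_le_mul_of_nonneg_right hBB (sq_nonneg ‖gw‖)
        linarith
      linarith [hsum2]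
    have h2 := mul_le_mul_of_nonneg_left hkey (le_of_lt (show (0:ℝ) < 1/μ by positivity))
    calc -(1/μ) * (‖gw‖ ^ 2
          + ∑ k, p k * ⟪gw, gradient (F k) (wplus k) - gradient (F k) wt⟫_ℝ)
        ≤ -(1/μ) * (4/5 * ‖gw‖ ^ 2) := by linarith
      _ = -(4 / (5 * μ)) * ‖gw‖ ^ 2 := by
          rw [neg_mul, neg_mul, neg_inj, div_mul_eq_mul_div, div_mul_eq_mul_div,
            mul_comm 5 μ]
          ring_nf
  -- quadratic term bound
  have hQ : ∑ k, p k * ‖wplus k - wt‖ ^ 2 ≤ 36 * B ^ 2 / (25 * μ ^ 2) * ‖gw‖ ^ 2 := by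
    have h1 : ∀ k : Fin N, p k * ‖wplus k - wt‖ ^ 2
        ≤ p k * (36 / (25 * μ ^ 2) * ‖gradient (F k) wt‖ ^ 2) := by
      intro k
      refine mul_le_mul_of_nonneg_left ?_ (hp k)
      calc ‖wplus k - wt‖ ^ 2 ≤ (6 / (5 * μ) * ‖gradient (F k) wt‖) ^ 2 :=
            pow_le_pow_left₀ (norm_nonneg _) (hnv k) 2
        _ = 36 / (25 * μ ^ 2) * ‖gradient (F k) wt‖ ^ 2 := by
            rw [mul_pow, div_pow, mul_pow]
            norm_num
    calc ∑ k, p k * ‖wplus k - wt‖ ^ 2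
        ≤ ∑ k, p k * (36 / (25 * μ ^ 2) * ‖gradient (F k) wt‖ ^ 2) :=
          Finset.sum_le_sum fun k _ => h1 k
      _ = 36 / (25 * μ ^ 2) * ∑ k, p k * ‖gradient (F k) wt‖ ^ 2 := by
          rw [Finset.mul_sum]
          exact Finset.sum_congr rfl fun k _ => by ring
      _ ≤ 36 / (25 * μ ^ 2) * (B ^ 2 * ‖gw‖ ^ 2) :=
          mul_le_mul_of_nonneg_left hdissim (by positivity)
      _ = 36 * B ^ 2 / (25 * μ ^ 2) * ‖gw‖ ^ 2 := by ring
  -- expectation machinery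
  have hW0 : ∀ s : Fin K → Fin N, (0:ℝ) ≤ ∏ j, p (s j) :=
    fun s => Finset.prod_nonneg fun j _ => hp _
  have hWtot : ∑ s : Fin K → Fin N, (∏ j, p (s j)) = 1 := fedprox_aux_total p hp1
  -- pointwise descent bound
  have hpt : ∀ s : Fin K → Fin N, f ((1 / (K : ℝ)) • ∑ j, wplus (s j))
      ≤ f wt + (1/(K:ℝ)) * ∑ j, ⟪gw, wplus (s j) - wt⟫_ℝ
        + L / (2*(K:ℝ)) * ∑ j, ‖wplus (s j) - wt‖ ^ 2 := by
    intro s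
    have hws : ((1/(K:ℝ)) • ∑ j, wplus (s j)) - wt = (1/(K:ℝ)) • ∑ j, (wplus (s j) - wt) := by
      have h0 : ∑ j : Fin K, (wplus (s j) - wt) = (∑ j, wplus (s j)) - (K:ℝ) • wt := by
        rw [Finset.sum_sub_distrib, Finset.sum_const, Finset.card_univ, Fintype.card_fin,
          ← Nat.cast_smul_eq_nsmul ℝ]
      rw [h0, smul_sub, smul_smul, one_div, inv_mul_cancel₀ hKne, one_smul]
    have hdes := fedprox_aux_descent hgradf hL.le hglip wt ((1/(K:ℝ)) • ∑ j, wplus (s j))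
    rw [hws] at hdes
    have hggw : g wt = gw := hgwt.symm
    rw [hggw] at hdes
    have hin : ⟪gw, (1/(K:ℝ)) • ∑ j, (wplus (s j) - wt)⟫_ℝ
        = (1/(K:ℝ)) * ∑ j, ⟪gw, wplus (s j) - wt⟫_ℝ := by
      rw [real_inner_smul_right, inner_sum]
    have hnormsq : ‖(1/(K:ℝ)) • ∑ j, (wplus (s j) - wt)‖ ^ 2
        ≤ (1/(K:ℝ)) * ∑ j, ‖wplus (s j) - wt‖ ^ 2 := by
      have h1 : ‖(1/(K:ℝ)) • ∑ j, (wplus (s j) - wt)‖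
          ≤ (1/(K:ℝ)) * ∑ j, ‖wplus (s j) - wt‖ := by
        rw [norm_smul, Real.norm_eq_abs, abs_of_pos (by positivity)]
        exact mul_le_mul_of_nonneg_left (norm_sum_le _ _) (by positivity)
      have h2 : (∑ j, ‖wplus (s j) - wt‖) ^ 2 ≤ (K:ℝ) * ∑ j, ‖wplus (s j) - wt‖ ^ 2 := by
        have := sq_sum_le_card_mul_sum_sq (s := (Finset.univ : Finset (Fin K)))
          (f := fun j => ‖wplus (s j) - wt‖)
        simpa [Finset.card_univ] using this
      calc ‖(1/(K:ℝ)) • ∑ j, (wplus (s j) - wt)‖ ^ 2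
          ≤ ((1/(K:ℝ)) * ∑ j, ‖wplus (s j) - wt‖) ^ 2 :=
            pow_le_pow_left₀ (norm_nonneg _) h1 2
        _ = (1/(K:ℝ))^2 * (∑ j, ‖wplus (s j) - wt‖) ^ 2 := by ring
        _ ≤ (1/(K:ℝ))^2 * ((K:ℝ) * ∑ j, ‖wplus (s j) - wt‖ ^ 2) :=
            mul_le_mul_of_nonneg_left h2 (by positivity)
        _ = (1/(K:ℝ)) * ∑ j, ‖wplus (s j) - wt‖ ^ 2 := by
            field_simp
    have h3 : L / 2 * ‖(1/(K:ℝ)) • ∑ j, (wplus (s j) - wt)‖ ^ 2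
        ≤ L / (2*(K:ℝ)) * ∑ j, ‖wplus (s j) - wt‖ ^ 2 := by
      calc L / 2 * ‖(1/(K:ℝ)) • ∑ j, (wplus (s j) - wt)‖ ^ 2
          ≤ L / 2 * ((1/(K:ℝ)) * ∑ j, ‖wplus (s j) - wt‖ ^ 2) :=
            mul_le_mul_of_nonneg_left hnormsq (by positivity)
        _ = L / (2*(K:ℝ)) * ∑ j, ‖wplus (s j) - wt‖ ^ 2 := by
            field_simp
    rw [hin] at hdes
    linarith
  -- expectation expansion
  have expand : ∀ (c : ℝ) (q : Fin N → ℝ),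
      ∑ s : Fin K → Fin N, (∏ j, p (s j)) * (c * ∑ j, q (s j))
        = c * (K:ℝ) * ∑ k, p k * q k := by
    intro c q
    have h1 : ∀ s : Fin K → Fin N, (∏ j, p (s j)) * (c * ∑ j, q (s j))
        = c * ∑ j, (∏ j', p (s j')) * q (s j) := by
      intro s
      simp only [Finset.mul_sum]
      exact Finset.sum_congr rfl fun j _ => by ring
    rw [Finset.sum_congr rfl fun s _ => h1 s, ← Finset.mul_sum, Finset.sum_comm]
    rw [Finset.sum_congr rfl (fun j _ => fedprox_aux_marg p hp1 q j), Finset.sum_const,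
      Finset.card_univ, Fintype.card_fin, nsmul_eq_mul]
    ring
  -- put it together
  have hmain : ∑ s : Fin K → Fin N, (∏ j, p (s j)) * f ((1 / (K : ℝ)) • ∑ j, wplus (s j))
      ≤ f wt + (∑ k, p k * ⟪gw, wplus k - wt⟫_ℝ)
        + L / 2 * ∑ k, p k * ‖wplus k - wt‖ ^ 2 := by
    calc ∑ s : Fin K → Fin N, (∏ j, p (s j)) * f ((1 / (K : ℝ)) • ∑ j, wplus (s j))
        ≤ ∑ s : Fin K → Fin N, (∏ j, p (s j)) * (f wt
            + (1/(K:ℝ)) * ∑ j, ⟪gw, wplus (s j) - wt⟫_ℝ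
            + L / (2*(K:ℝ)) * ∑ j, ‖wplus (s j) - wt‖ ^ 2) :=
          Finset.sum_le_sum fun s _ => mul_le_mul_of_nonneg_left (hpt s) (hW0 s)
      _ = f wt + (∑ k, p k * ⟪gw, wplus k - wt⟫_ℝ)
          + L / 2 * ∑ k, p k * ‖wplus k - wt‖ ^ 2 := by
          simp only [mul_add]
          rw [Finset.sum_add_distrib, Finset.sum_add_distrib, ← Finset.sum_mul, hWtot,
            one_mul, expand (1/(K:ℝ)) (fun k => ⟪gw, wplus k - wt⟫_ℝ),
            expand (L/(2*(K:ℝ))) (fun k => ‖wplus k - wt‖ ^ 2)]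
          field_simp
  -- final arithmetic
  have hfinal : -(4 / (5 * μ)) * ‖gw‖ ^ 2 + L / 2 * (36 * B ^ 2 / (25 * μ ^ 2) * ‖gw‖ ^ 2)
      ≤ -(1 / (24 * L * B ^ 2)) * ‖gw‖ ^ 2 := by
    have hcoef : -(4 / (5 * μ)) + L / 2 * (36 * B ^ 2 / (25 * μ ^ 2))
        ≤ -(1 / (24 * L * B ^ 2)) := by
      have e : -(4 / (5 * (6*L*B^2))) + L / 2 * (36 * B ^ 2 / (25 * (6*L*B^2) ^ 2))
          = -(17 / 150) * (1/(L * B ^ 2)) := by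
        field_simp
        ring
      have e2 : -(1 / (24 * L * B ^ 2)) = -(1/24) * (1/(L*B^2)) := by ring
      rw [hμdef, e, e2]
      have hx : (0:ℝ) < 1/(L*B^2) := by positivity
      nlinarith [hx]
    nlinarith [sq_nonneg ‖gw‖, hcoef]
  have hQ' : L / 2 * ∑ k, p k * ‖wplus k - wt‖ ^ 2
      ≤ L / 2 * (36 * B ^ 2 / (25 * μ ^ 2) * ‖gw‖ ^ 2) :=
    mul_le_mul_of_nonneg_left hQ (by positivity)
  calc ∑ s : Fin K → Fin N, (∏ j, p (s j)) * f ((1 / (K : ℝ)) • ∑ j, wplus (s j))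
      ≤ f wt + (∑ k, p k * ⟪gw, wplus k - wt⟫_ℝ)
        + L / 2 * ∑ k, p k * ‖wplus k - wt‖ ^ 2 := hmain
    _ ≤ f wt + -(4 / (5 * μ)) * ‖gw‖ ^ 2
        + L / 2 * (36 * B ^ 2 / (25 * μ ^ 2) * ‖gw‖ ^ 2) := by linarith
    _ ≤ f wt + -(1 / (24 * L * B ^ 2)) * ‖gw‖ ^ 2 := by linarith
    _ = f wt - 1 / (24 * L * B ^ 2) * ‖gw‖ ^ 2 := by ring
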